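/- Let q ≥ 2 and n ≥ q - 1, and let a_1, ..., a_n be residues mod q with gcd(a_i, q) = 1 for all i. Then for every ρ ∈ Z/qZ, the number of subsets I ⊆ [n] with ∑_{i∈I} a_i ≡ ρ (mod q) is at least C(n, ⌈(n-q)/2⌉)_q. -/

import Mathlib

/-- The mod-q binomial coefficient `C(n,s)_q = ∑_{0 ≤ j ≤ n, j ≡ s (mod q)} C(n,j)`. -/
def modBinom (n q : ℕ) (s : ℤ) : ℕ :=
  ∑ j ∈ Finset.range (n + 1), if ((j : ℤ) - s) % (q : ℤ) = 0 then n.choose j else 0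

/-- The sum of the `k` middle mod-`q` binomial coefficients,
`_{(n-k)/2 ≤ j < (n+k)/2} C(n,j)_q` (the integers `j` in question all lie in `[-q, n+q]`
when `k ≤ q`). -/
noncomputable def middleSum (n q k : ℕ) : ℕ :=
  ∑ j ∈ Finset.Icc (-(q : ℤ)) ((n : ℤ) + q),
    if (n : ℤ) - k ≤ 2 * j ∧ 2 * j < (n : ℤ) + k then modBinom n q j else 0


def mu (q : ℕ) : ℕ → ℕ → ℕ
  | 0, k => if q ≤ k then 1 else 0
  | n+1, k => if k = 0 then 0 else if q ≤ k then 2 * mu q n q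
      else mu q n (k-1) + mu q n (k+1)

lemma mu_zero (q : ℕ) (hq : 1 ≤ q) (n : ℕ) : mu q n 0 = 0 := by
  cases n <;> simp [mu] <;> omega

lemma mu_convex (q : ℕ) (hq : 2 ≤ q) :
    ∀ n a b, a ≤ b → b + 1 ≤ q → mu q n (a+1) + mu q n b ≤ mu q n a + mu q n (b+1) := by
  intro n
  induction n with
  | zero =>
    intro a b hab hbq
    simp only [mu]
    split_ifs <;> omega
  | succ n ih =>
    intro a b hab hbq
    rcases eq_or_lt_of_le hab with rfl | hab'
    · omega
    have hz : mu q n 0 = 0 := mu_zero q (by omega) n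
    rcases Nat.eq_zero_or_pos a with rfl | ha
    · -- a = 0
      obtain ⟨b', rfl⟩ : ∃ b', b = b' + 1 := ⟨b - 1, by omega⟩
      have e1 : mu q (n+1) (0+1) = mu q n 0 + mu q n 2 := by
        simp only [mu]; rw [if_neg (by omega), if_neg (by omega)]
      have e2 : mu q (n+1) 0 = 0 := mu_zero q (by omega) (n+1)
      have e3 : mu q (n+1) (b'+1) = mu q n b' + mu q n (b'+2) := by
        simp only [mu]; rw [if_neg (by omega), if_neg (by omega)]
        norm_num
      rcases eq_or_lt_of_le hbq with hb | hb
      · -- b + 1 = q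
        have e4 : mu q (n+1) (b'+1+1) = 2 * mu q n q := by
          simp only [mu]; rw [if_neg (by omega), if_pos (by omega)]
        have i1 : mu q n 2 + mu q n (b'+1) ≤ mu q n 1 + mu q n (b'+2) := by
          have h := ih 1 (b'+1) (by omega) (by omega)
          rwa [show 1+1 = 2 by omega, show b'+1+1 = b'+2 by omega] at h
        have i2 : mu q n 1 + mu q n b' ≤ mu q n 0 + mu q n (b'+1) := by
          have h := ih 0 b' (by omega) (by omega)
          rwa [show 0+1 = 1 by omega] at h
        have e5 : mu q n q = mu q n (b'+2) := by rw [show q = b'+2 by omega]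
        rw [e1, e2, e3, e4, e5]
        omega
      · -- b + 1 < q
        have e4 : mu q (n+1) (b'+1+1) = mu q n (b'+1) + mu q n (b'+3) := by
          simp only [mu]; rw [if_neg (by omega), if_neg (by omega)]
          norm_num
        have i1 : mu q n 2 + mu q n (b'+2) ≤ mu q n 1 + mu q n (b'+3) := by
          have h := ih 1 (b'+2) (by omega) (by omega)
          rwa [show 1+1 = 2 by omega, show b'+2+1 = b'+3 by omega] at h
        have i2 : mu q n 1 + mu q n b' ≤ mu q n 0 + mu q n (b'+1) := by
          have h := ih 0 b' (by omega) (by omega)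
          rwa [show 0+1 = 1 by omega] at h
        rw [e1, e2, e3, e4]
        omega
    · -- a ≥ 1
      obtain ⟨a', rfl⟩ : ∃ a', a = a' + 1 := ⟨a - 1, by omega⟩
      obtain ⟨b', rfl⟩ : ∃ b', b = b' + 1 := ⟨b - 1, by omega⟩
      have e1 : mu q (n+1) (a'+1+1) = mu q n (a'+1) + mu q n (a'+3) := by
        simp only [mu]; rw [if_neg (by omega), if_neg (by omega)]
        norm_num
      have e2 : mu q (n+1) (a'+1) = mu q n a' + mu q n (a'+2) := by
        simp only [mu]; rw [if_neg (by omega), if_neg (by omega)]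
        norm_num
      have e3 : mu q (n+1) (b'+1) = mu q n b' + mu q n (b'+2) := by
        simp only [mu]; rw [if_neg (by omega), if_neg (by omega)]
        norm_num
      rcases eq_or_lt_of_le hbq with hb | hb
      · -- b + 1 = q
        have e4 : mu q (n+1) (b'+1+1) = 2 * mu q n q := by
          simp only [mu]; rw [if_neg (by omega), if_pos (by omega)]
        have i1 : mu q n (a'+1) + mu q n b' ≤ mu q n a' + mu q n (b'+1) :=
          ih a' b' (by omega) (by omega)
        have i2 : mu q n (a'+3) + mu q n (b'+1) ≤ mu q n (a'+2) + mu q n (b'+2) := by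
          have h := ih (a'+2) (b'+1) (by omega) (by omega)
          rwa [show a'+2+1 = a'+3 by omega, show b'+1+1 = b'+2 by omega] at h
        have e5 : mu q n q = mu q n (b'+2) := by rw [show q = b'+2 by omega]
        rw [e1, e2, e3, e4, e5]
        omega
      · -- b + 1 < q
        have e4 : mu q (n+1) (b'+1+1) = mu q n (b'+1) + mu q n (b'+3) := by
          simp only [mu]; rw [if_neg (by omega), if_neg (by omega)]
          norm_num
        have i1 : mu q n (a'+1) + mu q n b' ≤ mu q n a' + mu q n (b'+1) :=
          ih a' b' (by omega) (by omega)
        have i2 : mu q n (a'+3) + mu q n (b'+2) ≤ mu q n (a'+2) + mu q n (b'+3) := by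
          have h := ih (a'+2) (b'+2) (by omega) (by omega)
          rwa [show a'+2+1 = a'+3 by omega, show b'+2+1 = b'+3 by omega] at h
        rw [e1, e2, e3, e4]
        omega

lemma mu_chain (q : ℕ) (hq : 2 ≤ q) (n : ℕ) :
    ∀ e a b, a + e ≤ b → b + e ≤ q → mu q n (a+e) + mu q n b ≤ mu q n a + mu q n (b+e) := by
  intro e
  induction e with
  | zero => intro a b _ _; simp
  | succ e ih =>
    intro a b h1 h2
    have c1 : mu q n (a+e+1) + mu q n b ≤ mu q n (a+e) + mu q n (b+1) :=
      mu_convex q hq n (a+e) b (by omega) (by omega)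
    have c2 : mu q n (a+e) + mu q n (b+1) ≤ mu q n a + mu q n (b+1+e) :=
      ih a (b+1) (by omega) (by omega)
    rw [show a+(e+1) = a+e+1 by omega, show b+(e+1) = b+1+e by omega]
    omega


/-- Sum of binomials `C(n,j)` over `j` whose residue mod `q` lies in the arc `[h, h+k)`. -/
def arcS (q n : ℕ) (k h : ℤ) : ℕ :=
  ∑ j ∈ Finset.range (n+1), if ((j:ℤ) - h) % q < k then n.choose j else 0

lemma ind_id (q : ℕ) (k : ℤ) (hq : 2 ≤ q) (hk1 : 1 ≤ k) (hkq : k + 1 ≤ q) (x : ℤ) (M : ℕ) :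
    ((if (x+1) % q < k then M else 0) + (if x % q < k then M else 0))
      = (if x % q < k - 1 then M else 0) + (if (x+1) % q < k + 1 then M else 0) := by
  have hq0 : (0:ℤ) < q := by exact_mod_cast Nat.pos_of_ne_zero (by omega)
  have h0 : 0 ≤ x % q := Int.emod_nonneg x (by omega)
  have h1 : x % q < q := Int.emod_lt_of_pos x hq0
  have h2 : (x+1) % q = (x % q + 1) % q := by
    have h1q : (1:ℤ) % q = 1 := Int.emod_eq_of_lt (by omega) (by omega)
    rw [Int.add_emod, h1q]
  rcases (by omega : x % q + 1 < q ∨ x % q + 1 = q) with h | h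
  · have h3 : (x+1) % q = x % q + 1 := by
      rw [h2, Int.emod_eq_of_lt (by omega) h]
    rw [h3]
    simp only [show (x % q + 1 < k) ↔ (x % q < k - 1) from by omega,
      show (x % q + 1 < k + 1) ↔ (x % q < k) from by omega]
  · have h3 : (x+1) % q = 0 := by rw [h2, h, Int.emod_self]
    rw [h3, if_pos (by omega : (0:ℤ) < k), if_pos (by omega : (0:ℤ) < k + 1),
      if_neg (by omega : ¬ x % q < k), if_neg (by omega : ¬ x % q < k - 1)]
    omega

lemma arcS_succ (q n : ℕ) (k h : ℤ) (hq : 2 ≤ q) (hk1 : 1 ≤ k) (hkq : k + 1 ≤ q) :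
    arcS q (n+1) k h = arcS q n (k-1) h + arcS q n (k+1) (h-1) := by
  have key : ∀ j : ℕ,
      (if (((j:ℤ)+1) - h) % q < k then n.choose j else 0)
        + (if ((j:ℤ) - h) % q < k then n.choose j else 0)
      = (if ((j:ℤ) - h) % q < k - 1 then n.choose j else 0)
        + (if ((j:ℤ) - (h-1)) % q < k + 1 then n.choose j else 0) := by
    intro j
    have e1 : ((j:ℤ)+1) - h = ((j:ℤ) - h) + 1 := by ring
    have e2 : ((j:ℤ) - (h-1)) = ((j:ℤ) - h) + 1 := by ring
    rw [e1, e2]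
    exact ind_id q k hq hk1 hkq ((j:ℤ) - h) (n.choose j)
  have hA : arcS q (n+1) k h
      = (∑ j ∈ Finset.range (n+1), if (((j:ℤ)+1) - h) % q < k then n.choose j else 0)
        + (∑ j ∈ Finset.range (n+1), if ((j:ℤ) - h) % q < k then n.choose j else 0) := by
    unfold arcS
    rw [Finset.sum_range_succ'
      (fun j => if (((j:ℤ)) - h) % q < k then (n+1).choose j else 0) (n+1)]
    have t1 : ∀ i : ℕ, (if ((((i+1) : ℕ):ℤ) - h) % q < k then (n+1).choose (i+1) else 0)
        = (if (((i:ℤ)+1) - h) % q < k then n.choose i else 0)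
          + (if ((((i+1) : ℕ):ℤ) - h) % q < k then n.choose (i+1) else 0) := by
      intro i
      have hc : ((((i+1) : ℕ):ℤ) - h) = ((i:ℤ)+1) - h := by push_cast; ring
      rw [Nat.choose_succ_succ]
      simp only [hc]
      split <;> simp
    rw [Finset.sum_congr rfl (fun i _ => t1 i), Finset.sum_add_distrib]
    have t2 : (∑ i ∈ Finset.range (n+1), if ((((i+1) : ℕ):ℤ) - h) % q < k then n.choose (i+1) else 0)
        + (if (((0:ℕ):ℤ) - h) % q < k then (n+1).choose 0 else 0)
        = ∑ j ∈ Finset.range (n+1), if ((j:ℤ) - h) % q < k then n.choose j else 0 := by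
      have s1 := Finset.sum_range_succ'
        (fun j => if (((j:ℤ)) - h) % q < k then n.choose j else 0) n
      have s2 := Finset.sum_range_succ
        (fun j => if (((j:ℤ)) - h) % q < k then n.choose j else 0) n
      simp only [Nat.choose_succ_self, ite_self, Nat.choose_self] at s2
      -- s1 : ∑_{range (n+1)} g = ∑_{range n} g (i+1) + g 0
      -- mismatch: our first sum ranges over range (n+1) with term n.choose (i+1)
      have s3 := Finset.sum_range_succ
        (fun i => if ((((i+1) : ℕ):ℤ) - h) % q < k then n.choose (i+1) else 0) n
      rw [s3, s1]
      simp
    rw [add_assoc, t2]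
  rw [hA]
  unfold arcS
  rw [← Finset.sum_add_distrib, ← Finset.sum_add_distrib]
  exact Finset.sum_congr rfl fun j _ => key j

def arc (q n k : ℕ) : ℕ := arcS q n k (((n:ℤ) - k + 2 - q)/2)

lemma arc_zero (q n : ℕ) (hq : 1 ≤ q) : arc q n 0 = 0 := by
  unfold arc arcS
  apply Finset.sum_eq_zero
  intro j _
  rw [if_neg]
  have hqz : (q:ℤ) ≠ 0 := by exact_mod_cast (by omega : q ≠ 0)
  have := Int.emod_nonneg ((j:ℤ) - (((n:ℤ) - ((0:ℕ):ℤ) + 2 - q)/2)) hqz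
  push_cast at this ⊢
  omega

lemma arc_full (q n : ℕ) (hq : 1 ≤ q) : arc q n q = 2 ^ n := by
  have hq0 : (0:ℤ) < q := by exact_mod_cast hq
  unfold arc arcS
  rw [Finset.sum_congr rfl (fun j _ => if_pos (Int.emod_lt_of_pos _ hq0))]
  exact Nat.sum_range_choose n

lemma arc_base (q k : ℕ) (hq : 2 ≤ q) (hkq : k < q) : arc q 0 k = 0 := by
  unfold arc arcS
  rw [Finset.sum_range_one, if_neg]
  rcases Nat.eq_zero_or_pos k with rfl | hk
  · intro hlt
    have hqz : (q:ℤ) ≠ 0 := by exact_mod_cast (by omega : q ≠ 0)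
    have := Int.emod_nonneg (((0:ℕ):ℤ) - (((0:ℕ):ℤ) - ((0:ℕ):ℤ) + 2 - q)/2) hqz
    push_cast at hlt this
    omega
  · set h : ℤ := (((0:ℕ):ℤ) - k + 2 - q)/2 with hh
    have hb : 2*h ≤ 2 - (k:ℤ) - q ∧ 2 - (k:ℤ) - q < 2*h + 2 := by
      constructor <;> omega
    have h1 : (0:ℤ) ≤ -h := by omega
    have h2 : -h < q := by omega
    have h3 : (k:ℤ) ≤ -h := by omega
    have : (((0:ℕ):ℤ) - h) % q = -h := by
      push_cast
      rw [zero_sub, Int.emod_eq_of_lt h1 h2]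
    rw [this]
    omega

lemma mu_eq_arc (q : ℕ) (hq : 2 ≤ q) : ∀ n k, k ≤ q → mu q n k = arc q n k := by
  intro n
  induction n with
  | zero =>
    intro k hk
    rcases eq_or_lt_of_le hk with heq | hk'
    · rw [heq]
      have : arc q 0 q = 2 ^ 0 := arc_full q 0 (by omega)
      rw [this]
      simp [mu]
    · rw [arc_base q k hq hk']
      simp [mu]
      omega
  | succ n ih =>
    intro k hk
    rcases Nat.eq_zero_or_pos k with rfl | hk1
    · rw [arc_zero q _ (by omega), mu_zero q (by omega)]
    rcases eq_or_lt_of_le hk with heq | hkq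
    · -- k = q
      rw [heq]
      have e1 : mu q (n+1) q = 2 * mu q n q := by
        simp only [mu]; rw [if_neg (by omega), if_pos (by omega)]
      rw [e1, ih q le_rfl, arc_full q n (by omega), arc_full q (n+1) (by omega)]
      ring
    · -- 1 ≤ k < q
      have e1 : mu q (n+1) k = mu q n (k-1) + mu q n (k+1) := by
        simp only [mu]; rw [if_neg (by omega), if_neg (by omega)]
      rw [e1, ih (k-1) (by omega), ih (k+1) (by omega)]
      have hcast1 : ((k-1 : ℕ) : ℤ) = (k:ℤ) - 1 := by omega
      have hcast2 : ((k+1 : ℕ) : ℤ) = (k:ℤ) + 1 := by omega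
      have e2 : (((n:ℕ):ℤ) - ((k-1:ℕ):ℤ) + 2 - q)/2 = ((((n+1):ℕ):ℤ) - (k:ℤ) + 2 - q)/2 := by
        omega
      have e3 : (((n:ℕ):ℤ) - ((k+1:ℕ):ℤ) + 2 - q)/2
          = ((((n+1):ℕ):ℤ) - (k:ℤ) + 2 - q)/2 - 1 := by omega
      unfold arc
      rw [e2, e3, hcast1, hcast2,
        arcS_succ q n (k:ℤ) _ hq (by exact_mod_cast hk1) (by
          push_cast
          omega)]
section Counting

variable {q : ℕ} {ι : Type*} [DecidableEq ι]

lemma count_insert [NeZero q] (i : ι) (t : Finset ι) (hit : i ∉ t) (a : ι → ZMod q)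
    (ρ : ZMod q) :
    ((insert i t).powerset.filter (fun I => ∑ x ∈ I, a x = ρ)).card
      = (t.powerset.filter (fun I => ∑ x ∈ I, a x = ρ)).card
        + (t.powerset.filter (fun I => ∑ x ∈ I, a x = ρ - a i)).card := by
  classical
  have hdisj : Disjoint (t.powerset.filter (fun I => ∑ x ∈ I, a x = ρ))
      ((t.powerset.image (insert i)).filter (fun I => ∑ x ∈ I, a x = ρ)) := by
    rw [Finset.disjoint_left]
    intro I h1 h2
    have hIt : I ⊆ t := Finset.mem_powerset.1 (Finset.mem_filter.1 h1).1
    obtain ⟨J, hJ, rfl⟩ := Finset.mem_image.1 (Finset.mem_filter.1 h2).1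
    exact hit (hIt (Finset.mem_insert_self i J))
  rw [Finset.powerset_insert, Finset.filter_union, Finset.card_union_of_disjoint hdisj]
  congr 1
  rw [Finset.filter_image]
  rw [Finset.card_image_of_injOn (by
    intro I hI J hJ hIJ
    simp only [Finset.coe_filter, Set.mem_setOf_eq] at hI hJ
    have hiI : i ∉ I := fun h => hit (Finset.mem_powerset.1 hI.1 h)
    have hiJ : i ∉ J := fun h => hit (Finset.mem_powerset.1 hJ.1 h)
    have := congrArg (fun s => Finset.erase s i) hIJ
    simpa [Finset.erase_insert hiI, Finset.erase_insert hiJ] using this)]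
  congr 1
  apply Finset.filter_congr
  intro I hI
  have hiI : i ∉ I := fun h => hit (Finset.mem_powerset.1 hI h)
  rw [Finset.sum_insert hiI]
  constructor
  · intro h; rw [← h]; ring
  · intro h; rw [h]; ring

lemma key (hq : 2 ≤ q) (s : Finset ι) (a : ι → ZMod q)
    (ha : ∀ i ∈ s, IsUnit (a i)) (S : Finset (ZMod q)) :
    mu q s.card S.card ≤ ∑ ρ ∈ S, (s.powerset.filter (fun I => ∑ x ∈ I, a x = ρ)).card := by
  classical
  haveI : NeZero q := ⟨by omega⟩
  induction s using Finset.induction_on generalizing S with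
  | empty =>
    simp only [Finset.powerset_empty, Finset.card_empty]
    have hsing : ∀ ρ : ZMod q,
        (({∅} : Finset (Finset ι)).filter (fun I => ∑ x ∈ I, a x = ρ)).card
          = if (0 : ZMod q) = ρ then 1 else 0 := by
      intro ρ
      rw [Finset.filter_singleton]
      by_cases h : (∑ x ∈ (∅ : Finset ι), a x) = ρ
      · rw [if_pos h, if_pos (by simpa using h)]; simp
      · rw [if_neg h, if_neg (by simpa using h)]; simp
    rw [Finset.sum_congr rfl (fun ρ _ => hsing ρ), Finset.sum_ite_eq S (0 : ZMod q) (fun _ => 1)]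
    by_cases h0 : q ≤ S.card
    · have hcard : S.card = q :=
        le_antisymm (le_trans (Finset.card_le_univ S) (le_of_eq (ZMod.card q))) h0
      have hU : S = Finset.univ := by
        rw [← Finset.card_eq_iff_eq_univ, ZMod.card]; exact hcard
      rw [if_pos (hU ▸ Finset.mem_univ (0 : ZMod q))]
      simp only [mu]
      split <;> omega
    · simp only [mu, if_neg h0]
      exact Nat.zero_le _
  | @insert i t hit ih =>
    have hu : IsUnit (a i) := ha i (Finset.mem_insert_self i t)
    have hat : ∀ x ∈ t, IsUnit (a x) := fun x hx => ha x (Finset.mem_insert_of_mem hx)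
    set u := a i with hudef
    set N : ZMod q → ℕ := fun ρ => (t.powerset.filter (fun I => ∑ x ∈ I, a x = ρ)).card with hN
    have hcnt : ∀ ρ ∈ S, ((insert i t).powerset.filter (fun I => ∑ x ∈ I, a x = ρ)).card
        = N ρ + N (ρ - u) := fun ρ _ => count_insert i t hit a ρ
    rw [Finset.sum_congr rfl hcnt, Finset.sum_add_distrib,
      Finset.card_insert_of_notMem hit]
    set S' := S.image (fun ρ => ρ - u) with hS'
    have hinj : Function.Injective (fun ρ : ZMod q => ρ - u) := fun x y h => by
      simpa using congrArg (fun z => z + u) h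
    have h2 : ∑ ρ ∈ S, N (ρ - u) = ∑ ρ ∈ S', N ρ :=
      (Finset.sum_image (fun x _ y _ h => hinj h)).symm
    rw [h2]
    have hcard' : S'.card = S.card := Finset.card_image_of_injective S hinj
    have hsumui : ∑ ρ ∈ S ∪ S', N ρ + ∑ ρ ∈ S ∩ S', N ρ = ∑ ρ ∈ S, N ρ + ∑ ρ ∈ S', N ρ :=
      Finset.sum_union_inter
    have hcardui : (S ∪ S').card + (S ∩ S').card = S.card + S.card := by
      rw [Finset.card_union_add_card_inter, hcard']
    have hSq : S.card ≤ q := le_trans (Finset.card_le_univ S) (le_of_eq (ZMod.card q))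
    have hUq : (S ∪ S').card ≤ q :=
      le_trans (Finset.card_le_univ _) (le_of_eq (ZMod.card q))
    rcases Nat.eq_zero_or_pos S.card with hk0 | hk1
    · rw [hk0, mu_zero q (by omega)]
      exact Nat.zero_le _
    by_cases hSS : S' = S
    · -- S is shift-invariant, hence S = univ
      have hSuniv : S = Finset.univ := by
        apply Finset.eq_univ_iff_forall.2
        intro y
        obtain ⟨x, hx⟩ := Finset.card_pos.1 hk1
        have hstep : ∀ z ∈ S, z - u ∈ S := by
          intro z hz
          have : z - u ∈ S' := Finset.mem_image_of_mem _ hz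
          rwa [hSS] at this
        have hiter : ∀ m : ℕ, x - (m : ZMod q) * u ∈ S := by
          intro m
          induction m with
          | zero => simpa using hx
          | succ m ihm =>
            have h' := hstep _ ihm
            have e : x - ((m+1 : ℕ) : ZMod q) * u = (x - (m : ZMod q) * u) - u := by
              push_cast; ring
            rwa [← e] at h'
        obtain ⟨w, hw⟩ := hu
        have hw1 : (↑w⁻¹ : ZMod q) * ↑w = 1 := by simp
        have hy : x - (((x - y) * ↑w⁻¹ : ZMod q).val : ZMod q) * u = y := by
          rw [ZMod.natCast_val, ZMod.cast_id, ← hw, mul_assoc, hw1, mul_one]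
          ring
        rw [← hy]
        exact hiter _
      have hkq : S.card = q := by rw [hSuniv, Finset.card_univ, ZMod.card]
      have e1 : mu q (t.card + 1) S.card = 2 * mu q t.card q := by
        simp only [mu]; rw [if_neg (by omega), if_pos (by omega)]
      rw [e1]
      have hIH : mu q t.card q ≤ ∑ ρ ∈ S, N ρ := by
        have h := ih hat S
        rwa [hkq] at h
      have hsame : ∑ ρ ∈ S', N ρ = ∑ ρ ∈ S, N ρ := by rw [hSS]
      rw [hsame]
      omega
    · -- proper case
      have hklt : S.card < q := by
        rcases eq_or_lt_of_le hSq with heq | h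
        · exfalso
          have hU1 : S = Finset.univ := by
            rw [← Finset.card_eq_iff_eq_univ, ZMod.card]; exact heq
          have hU2 : S' = Finset.univ := by
            rw [← Finset.card_eq_iff_eq_univ, ZMod.card, hcard']; exact heq
          exact hSS (hU2.trans hU1.symm)
        · exact h
      have hjlt : (S ∩ S').card < S.card := by
        rcases eq_or_lt_of_le (Finset.card_le_card (Finset.inter_subset_left : S ∩ S' ⊆ S)) with heq | h
        · exfalso
          have h1 : S ∩ S' = S := Finset.eq_of_subset_of_card_le Finset.inter_subset_left (by omega)
          have h2' : S ⊆ S' := by rw [← h1]; exact Finset.inter_subset_right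
          exact hSS (Finset.eq_of_subset_of_card_le h2' (by omega)).symm
        · exact h
      have hchain := mu_chain q hq t.card (S.card - 1 - (S ∩ S').card) (S ∩ S').card
        (S.card + 1) (by omega) (by omega)
      rw [show (S ∩ S').card + (S.card - 1 - (S ∩ S').card) = S.card - 1 by omega,
        show S.card + 1 + (S.card - 1 - (S ∩ S').card) = (S ∪ S').card by omega] at hchain
      have e1 : mu q (t.card + 1) S.card = mu q t.card (S.card - 1) + mu q t.card (S.card + 1) := by
        simp only [mu]; rw [if_neg (by omega), if_neg (by omega)]
      rw [e1]
      have hIH1 : mu q t.card (S ∩ S').card ≤ ∑ ρ ∈ S ∩ S', N ρ := ih hat (S ∩ S')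
      have hIH2 : mu q t.card (S ∪ S').card ≤ ∑ ρ ∈ S ∪ S', N ρ := ih hat (S ∪ S')
      omega

end Counting

lemma modBinom_eq_arc (q n : ℕ) (hq : 2 ≤ q) (hn : q - 1 ≤ n) :
    modBinom n q (((n - q + 1) / 2 : ℕ) : ℤ) = arc q n 1 := by
  have hs : (((n - q + 1) / 2 : ℕ) : ℤ) = ((n:ℤ) - 1 + 2 - q) / 2 := by omega
  unfold modBinom arc arcS
  rw [hs]
  simp only [Nat.cast_one]
  apply Finset.sum_congr rfl
  intro j _
  have hqz : (q:ℤ) ≠ 0 := by exact_mod_cast (by omega : q ≠ 0)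
  have hnn := Int.emod_nonneg ((j:ℤ) - (((n:ℤ) - 1 + 2 - q) / 2)) hqz
  by_cases hx : ((j:ℤ) - (((n:ℤ) - 1 + 2 - q) / 2)) % q = 0
  · rw [if_pos hx, if_pos (by omega)]
  · rw [if_neg hx, if_neg (by omega)]

theorem griggs_lower_bound (q n : ℕ) (hq : 2 ≤ q) (hn : q - 1 ≤ n)
    (a : Fin n → ZMod q) (ha : ∀ i, IsUnit (a i)) (ρ : ZMod q) :
    modBinom n q ((n - q + 1) / 2 : ℕ) ≤
      ((Finset.univ : Finset (Finset (Fin n))).filter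
          (fun I => (∑ i ∈ I, a i) = ρ)).card := by
  classical
  have h1 := key hq (Finset.univ : Finset (Fin n)) a (fun i _ => ha i) ({ρ} : Finset (ZMod q))
  rw [Finset.sum_singleton, Finset.powerset_univ, Finset.card_univ, Fintype.card_fin,
    Finset.card_singleton] at h1
  calc modBinom n q ((n - q + 1) / 2 : ℕ) = arc q n 1 := modBinom_eq_arc q n hq hn
    _ = mu q n 1 := (mu_eq_arc q hq n 1 (by omega)).symm
    _ ≤ _ := le_trans h1 (le_of_eq (by congr 1))
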